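/- Let F₀, …, F_k : ℝ^d → ℝ be twice continuously differentiable with ‖∇²F_i(w)‖ ≤ L for all w and with M-Lipschitz Hessians. Let w₀, …, w_k, w* ∈ ℝ^d, let k_lin ∈ ℕ with k_lin ≤ k + 1, and suppose there are constants ν > 0, μ > 0 and ρ ∈ [0,1) such that ‖w_i − w*‖ ≤ (ν/μ)(√ρ)^{i − k_lin} for all i with k_lin ≤ i ≤ k. Then with uniform weights γ_i = 1/(k+1): ∑_{i=0}^k γ_i ‖(∇²F_i(w_i) − ∇²F_i(w*))(w_k − w*)‖ ≤ (C/(k+1))·‖w_k − w*‖, where C = 2L·k_lin + νM/(μ(1 − √ρ)). -/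

import Mathlib

open Finset
open scoped RealInnerProductSpace

noncomputable section

abbrev Vec (d : ℕ) := EuclideanSpace ℝ (Fin d)

/-- Hessian memory-error bound for the uniformly path-averaged
subsampled Hessian once the iterates converge R-linearly after iteration `klin`. -/
theorem hessian_memory_error_bound {d k : ℕ}
    (L M ν μ ρ : ℝ)
    (hL : 0 < L) (hM : 0 ≤ M) (hν : 0 < ν) (hμ : 0 < μ)
    (hρ0 : 0 ≤ ρ) (hρ1 : ρ < 1)
    (F : ℕ → Vec d → ℝ) (gradF : ℕ → Vec d → Vec d)
    (HF : ℕ → Vec d → (Vec d →L[ℝ] Vec d))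
    (hFsmooth : ∀ i, ContDiff ℝ 2 (F i))
    (hgradF : ∀ i x, HasGradientAt (F i) (gradF i x) x)
    (hHF : ∀ i x, HasFDerivAt (gradF i) (HF i x) x)
    (hHub : ∀ i x, ‖HF i x‖ ≤ L)
    (hLipF : ∀ i x y, ‖HF i x - HF i y‖ ≤ M * ‖x - y‖)
    (w : ℕ → Vec d) (wstar : Vec d)
    (klin : ℕ) (hklin : klin ≤ k + 1)
    (hdecay : ∀ i, klin ≤ i → i ≤ k →
      ‖w i - wstar‖ ≤ ν / μ * Real.sqrt ρ ^ (i - klin)) :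
    ∑ i ∈ Finset.range (k + 1), ((k : ℝ) + 1)⁻¹ *
        ‖HF i (w i) (w k - wstar) - HF i wstar (w k - wstar)‖ ≤
      (2 * L * klin + ν * M / (μ * (1 - Real.sqrt ρ))) / ((k : ℝ) + 1) * ‖w k - wstar‖ := by
  set r := Real.sqrt ρ with hrdef
  have hr0 : 0 ≤ r := Real.sqrt_nonneg _
  have hr1 : r < 1 := by
    have : Real.sqrt ρ < Real.sqrt 1 := Real.sqrt_lt_sqrt hρ0 hρ1
    simpa using this
  have h1r : 0 < 1 - r := by linarith
  set e := ‖w k - wstar‖ with he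
  have he0 : 0 ≤ e := norm_nonneg _
  have hterm : ∀ i, ‖HF i (w i) (w k - wstar) - HF i wstar (w k - wstar)‖ ≤
      ‖HF i (w i) - HF i wstar‖ * e := by
    intro i
    have h := (HF i (w i) - HF i wstar).le_opNorm (w k - wstar)
    rwa [ContinuousLinearMap.sub_apply] at h
  set B : ℕ → ℝ := fun i => if i < klin then 2 * L else M * (ν / μ) * r ^ (i - klin) with hB
  have hbound : ∀ i ∈ Finset.range (k + 1),
      ‖HF i (w i) (w k - wstar) - HF i wstar (w k - wstar)‖ ≤ B i * e := by
    intro i hi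
    refine (hterm i).trans (mul_le_mul_of_nonneg_right ?_ he0)
    by_cases h : i < klin
    · simp only [hB, h, if_true]
      calc ‖HF i (w i) - HF i wstar‖ ≤ ‖HF i (w i)‖ + ‖HF i wstar‖ := norm_sub_le _ _
        _ ≤ L + L := add_le_add (hHub _ _) (hHub _ _)
        _ = 2 * L := by ring
    · simp only [hB, h, if_false]
      have hik : i ≤ k := Nat.lt_succ_iff.mp (Finset.mem_range.mp hi)
      calc ‖HF i (w i) - HF i wstar‖ ≤ M * ‖w i - wstar‖ := hLipF _ _ _
        _ ≤ M * (ν / μ * r ^ (i - klin)) :=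
            mul_le_mul_of_nonneg_left (hdecay i (Nat.le_of_not_lt h) hik) hM
        _ = M * (ν / μ) * r ^ (i - klin) := by ring
  have hgeom : ∑ i ∈ Finset.range (k + 1 - klin), r ^ i ≤ (1 - r)⁻¹ := by
    have hn : (0:ℝ) ≤ r ^ (k + 1 - klin) := pow_nonneg hr0 _
    rw [geom_sum_eq (ne_of_lt hr1), div_le_iff_of_neg (by linarith : r - 1 < 0)]
    have hx : (1 - r)⁻¹ * (r - 1) = -1 := by field_simp; ring
    linarith
  have hsumB : ∑ i ∈ Finset.range (k + 1), B i ≤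
      2 * L * klin + ν * M / (μ * (1 - r)) := by
    rw [← Finset.sum_range_add_sum_Ico B hklin]
    have h1 : ∑ i ∈ Finset.range klin, B i = 2 * L * klin := by
      have hc : ∀ i ∈ Finset.range klin, B i = 2 * L :=
        fun i hi => by simp [hB, Finset.mem_range.mp hi]
      rw [Finset.sum_congr rfl hc, Finset.sum_const, Finset.card_range, nsmul_eq_mul]
      ring
    have h2 : ∑ i ∈ Finset.Ico klin (k + 1), B i ≤ ν * M / (μ * (1 - r)) := by
      have : ∑ i ∈ Finset.Ico klin (k + 1), B i
          = M * (ν / μ) * ∑ i ∈ Finset.range (k + 1 - klin), r ^ i := by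
        rw [Finset.sum_Ico_eq_sum_range, Finset.mul_sum]
        refine Finset.sum_congr rfl fun i _ => ?_
        simp [hB, Nat.add_sub_cancel_left]
      rw [this]
      calc M * (ν / μ) * ∑ i ∈ Finset.range (k + 1 - klin), r ^ i
          ≤ M * (ν / μ) * (1 - r)⁻¹ := by
            apply mul_le_mul_of_nonneg_left hgeom (by positivity)
        _ = ν * M / (μ * (1 - r)) := by field_simp
      done
    linarith
  have hk1 : (0:ℝ) < (k : ℝ) + 1 := by positivity
  calc ∑ i ∈ Finset.range (k + 1), ((k : ℝ) + 1)⁻¹ *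
        ‖HF i (w i) (w k - wstar) - HF i wstar (w k - wstar)‖
      ≤ ∑ i ∈ Finset.range (k + 1), ((k : ℝ) + 1)⁻¹ * (B i * e) := by
        refine Finset.sum_le_sum fun i hi => ?_
        exact mul_le_mul_of_nonneg_left (hbound i hi) (by positivity)
    _ = ((k : ℝ) + 1)⁻¹ * ((∑ i ∈ Finset.range (k + 1), B i) * e) := by
        rw [← Finset.mul_sum, ← Finset.sum_mul]
    _ ≤ ((k : ℝ) + 1)⁻¹ * ((2 * L * klin + ν * M / (μ * (1 - r))) * e) := by
        apply mul_le_mul_of_nonneg_left (mul_le_mul_of_nonneg_right hsumB he0) (by positivity)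
    _ = (2 * L * klin + ν * M / (μ * (1 - r))) / ((k : ℝ) + 1) * e := by
        rw [div_eq_mul_inv]
        ring
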